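/- For any point ξ = (ξ_1, …, ξ_N) with nonzero algebraic coordinates, the projective height of (1 : ξ_1 : ⋯ : ξ_N) satisfies h(ξ) ≥ (1/2)·log(N+1), with equality if and only if every coordinate ξ_i is a root of unity. -/

import Mathlib

noncomputable section

open Classical NumberField IsDedekindDomain

/-- The `v`-adic absolute value on a number field `K`, normalized so that
`|x|_v = N(v)^{-ord_v(x)}` (the standard absolute value raised to the local degree
`[K_v : ℚ_v]`, so that the weight of `v` in height formulas is `1/[K:ℚ]`). -/
def finAbs {K : Type} [Field K] [NumberField K]
    (v : HeightOneSpectrum (𝓞 K)) (x : K) : ℝ :=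
  if h : x = 0 then 0 else
    (Ideal.absNorm v.asIdeal : ℝ) ^
      (Multiplicative.toAdd (WithZero.unzero ((Valuation.ne_zero_iff (v.valuation K)).mpr h)))

/-- The projective height of a tuple of elements of a number field `K`,
using the euclidean norm at the archimedean places. -/
def projHeightK (K : Type) [Field K] [NumberField K] {ι : Type} [Fintype ι]
    (ξ : ι → K) : ℝ :=
  (∑ w : InfinitePlace K,
      ((w.mult : ℝ) / (Module.finrank ℚ K)) *
        Real.log (Real.sqrt (∑ i, (w (ξ i)) ^ 2)))
  + ∑ᶠ v : HeightOneSpectrum (𝓞 K),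
      ((1 : ℝ) / (Module.finrank ℚ K)) * Real.log (⨆ i, finAbs v (ξ i))

section Aux

variable {K : Type} [Field K] [NumberField K]

lemma one_lt_absNormP (v : HeightOneSpectrum (𝓞 K)) : 1 < Ideal.absNorm v.asIdeal := by
  have h0 : Ideal.absNorm v.asIdeal ≠ 0 :=
    Ideal.absNorm_ne_zero_iff_mem_nonZeroDivisors.mpr
      (mem_nonZeroDivisors_of_ne_zero v.ne_bot)
  have h1 : Ideal.absNorm v.asIdeal ≠ 1 := by
    rw [Ne, Ideal.absNorm_eq_one_iff]
    exact v.isPrime.ne_top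
  omega

lemma one_lt_absNormR (v : HeightOneSpectrum (𝓞 K)) : (1:ℝ) < (Ideal.absNorm v.asIdeal : ℝ) := by
  exact_mod_cast one_lt_absNormP v

lemma finAbs_eq (v : HeightOneSpectrum (𝓞 K)) {x : K} (h : x ≠ 0) :
    finAbs v x = (Ideal.absNorm v.asIdeal : ℝ) ^
      (Multiplicative.toAdd (WithZero.unzero ((Valuation.ne_zero_iff (v.valuation K)).mpr h))) := by
  rw [finAbs, dif_neg h]

lemma finAbs_pos (v : HeightOneSpectrum (𝓞 K)) {x : K} (h : x ≠ 0) : 0 < finAbs v x := by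
  rw [finAbs_eq v h]
  exact zpow_pos (lt_trans one_pos (one_lt_absNormR v)) _

lemma finAbs_one (v : HeightOneSpectrum (𝓞 K)) : finAbs v (1:K) = 1 := by
  rw [finAbs_eq v one_ne_zero]
  have : WithZero.unzero ((Valuation.ne_zero_iff (v.valuation K)).mpr (one_ne_zero : (1:K) ≠ 0)) = 1 := by
    rw [← WithZero.coe_inj, WithZero.coe_unzero, map_one, WithZero.coe_one]
  rw [this]
  simp

lemma finAbs_mul (v : HeightOneSpectrum (𝓞 K)) {x y : K} (hx : x ≠ 0) (hy : y ≠ 0) :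
    finAbs v (x * y) = finAbs v x * finAbs v y := by
  rw [finAbs_eq v (mul_ne_zero hx hy), finAbs_eq v hx, finAbs_eq v hy,
    ← zpow_add₀ (ne_of_gt (lt_trans one_pos (one_lt_absNormR v)))]
  congr 1
  rw [← toAdd_mul]
  congr 1
  rw [← WithZero.coe_inj, WithZero.coe_unzero, WithZero.coe_mul, WithZero.coe_unzero,
    WithZero.coe_unzero, map_mul]

lemma finAbs_inv (v : HeightOneSpectrum (𝓞 K)) {x : K} (hx : x ≠ 0) :
    finAbs v x⁻¹ = (finAbs v x)⁻¹ := by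
  have h := finAbs_mul v (inv_ne_zero hx) hx
  rw [inv_mul_cancel₀ hx, finAbs_one] at h
  exact eq_inv_of_mul_eq_one_left h.symm

lemma finAbs_eq_one_iff (v : HeightOneSpectrum (𝓞 K)) {x : K} (hx : x ≠ 0) :
    finAbs v x = 1 ↔ v.valuation K x = 1 := by
  rw [finAbs_eq v hx]
  rw [← zpow_zero ((Ideal.absNorm v.asIdeal : ℝ))]
  rw [zpow_right_injective₀ (lt_trans one_pos (one_lt_absNormR v))
    (ne_of_gt (one_lt_absNormR v)) |>.eq_iff]
  constructor
  · intro h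
    have : WithZero.unzero ((Valuation.ne_zero_iff (v.valuation K)).mpr hx) = 1 := by
      have := congrArg Multiplicative.ofAdd h
      simpa using this
    rw [← WithZero.coe_unzero ((Valuation.ne_zero_iff (v.valuation K)).mpr hx), this, WithZero.coe_one]
  · intro h
    have : WithZero.unzero ((Valuation.ne_zero_iff (v.valuation K)).mpr hx) = 1 := by
      rw [← WithZero.coe_inj, WithZero.coe_unzero, h, WithZero.coe_one]
    rw [this]; rfl

/-- count of v in span a -/
def cnt (v : HeightOneSpectrum (𝓞 K)) (a : 𝓞 K) : ℕ :=
  (Associates.mk v.asIdeal).count (Associates.mk (Ideal.span {a})).factors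

lemma finAbs_coe (v : HeightOneSpectrum (𝓞 K)) {a : 𝓞 K} (ha : a ≠ 0) :
    finAbs v (a : K) = (Ideal.absNorm v.asIdeal : ℝ) ^ (-(cnt v a : ℤ)) := by
  have ha' : (a : K) ≠ 0 := by
    simpa using (RingOfIntegers.coe_ne_zero_iff).mpr ha
  rw [finAbs_eq v ha']
  congr 1
  have hval : v.valuation K (a : K) = v.intValuationDef a := v.valuation_of_algebraMap a
  have hint : v.intValuationDef a = Multiplicative.ofAdd (-(cnt v a : ℤ)) :=
    v.intValuationDef_if_neg ha
  have : WithZero.unzero ((Valuation.ne_zero_iff (v.valuation K)).mpr ha')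
      = Multiplicative.ofAdd (-(cnt v a : ℤ)) := by
    rw [← WithZero.coe_inj, WithZero.coe_unzero, hval, hint]
  rw [this, toAdd_ofAdd]

lemma finAbs_support_int {a : 𝓞 K} (ha : a ≠ 0) :
    (Function.support fun v : HeightOneSpectrum (𝓞 K) => Real.log (finAbs v (a : K)))
      ⊆ Function.mulSupport fun v => v.maxPowDividing (Ideal.span {a}) := by
  intro v hv
  simp only [Function.mem_support] at hv
  simp only [Function.mem_mulSupport, HeightOneSpectrum.maxPowDividing]
  intro hcon
  apply hv
  have hc : (Associates.mk v.asIdeal).count (Associates.mk (Ideal.span {a})).factors = 0 := by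
    by_contra hne
    have h1 : (⊤ : Ideal (𝓞 K)) ≤ v.asIdeal := by
      rw [← Ideal.one_eq_top, ← hcon]
      exact Ideal.pow_le_self hne
    exact v.isPrime.ne_top (top_le_iff.mp h1)
  rw [finAbs_coe v ha]
  have : cnt v a = 0 := hc
  rw [this]
  simp


omit [NumberField K] in
lemma span_ne_zero' {a : 𝓞 K} (ha : a ≠ 0) : Ideal.span ({a} : Set (𝓞 K)) ≠ 0 := by
  simpa [Ideal.span_singleton_eq_bot] using ha

lemma finsum_log_finAbs_int {a : 𝓞 K} (ha : a ≠ 0) :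
    ∑ᶠ v : HeightOneSpectrum (𝓞 K), Real.log (finAbs v (a : K))
      = - Real.log (Ideal.absNorm (Ideal.span ({a} : Set (𝓞 K))) : ℝ) := by
  have hI := span_ne_zero' ha
  set s := (Ideal.finite_mulSupport hI).toFinset with hs
  have hsub : (Function.support fun v : HeightOneSpectrum (𝓞 K) =>
      Real.log (finAbs v (a : K))) ⊆ (s : Set (HeightOneSpectrum (𝓞 K))) := by
    intro v hv
    have := finAbs_support_int ha hv
    exact (Set.Finite.mem_toFinset _).mpr this
  rw [finsum_eq_sum_of_support_subset _ hsub]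
  have hprod : ∏ v ∈ s, v.maxPowDividing (Ideal.span ({a} : Set (𝓞 K)))
      = Ideal.span ({a} : Set (𝓞 K)) := by
    rw [← finprod_eq_prod_of_mulSupport_subset _ (s := s) (fun v hv => (Set.Finite.mem_toFinset _).mpr hv)]
    exact Ideal.finprod_heightOneSpectrum_factorization hI
  have habs : (Ideal.absNorm (Ideal.span ({a} : Set (𝓞 K))) : ℝ)
      = ∏ v ∈ s, (Ideal.absNorm v.asIdeal : ℝ) ^ (cnt v a) := by
    rw [← hprod, map_prod]
    push_cast
    refine Finset.prod_congr rfl fun v _ => ?_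
    rw [HeightOneSpectrum.maxPowDividing, map_pow]
    norm_cast
  rw [habs]
  rw [Real.log_prod (fun v _ => pow_ne_zero _ (ne_of_gt (lt_trans one_pos (one_lt_absNormR v))))]
  rw [← Finset.sum_neg_distrib]
  refine Finset.sum_congr rfl fun v _ => ?_
  rw [finAbs_coe v ha, Real.log_zpow, Real.log_pow]
  push_cast
  ring

lemma absNorm_eq_norm {a : 𝓞 K} :
    (Ideal.absNorm (Ideal.span ({a} : Set (𝓞 K))) : ℝ)
      = ((|Algebra.norm ℚ (a : K)| : ℚ) : ℝ) := by
  rw [Ideal.absNorm_span_singleton]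
  have h1 : ((Algebra.norm ℤ a : ℤ) : ℚ) = Algebra.norm ℚ (a : K) := Algebra.coe_norm_int a
  have h2 : (((Algebra.norm ℤ a).natAbs : ℝ)) = |((Algebra.norm ℤ a : ℤ) : ℝ)| := by
    rw [Nat.cast_natAbs, Int.cast_abs]
  rw [h2]
  rw [show ((Algebra.norm ℤ a : ℤ) : ℝ) = (((Algebra.norm ℤ a : ℤ) : ℚ) : ℝ) by push_cast; ring]
  rw [h1, ← Rat.cast_abs]

lemma sum_mult_log {x : K} (hx : x ≠ 0) :
    ∑ w : InfinitePlace K, (w.mult : ℝ) * Real.log (w x)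
      = Real.log ((|Algebra.norm ℚ x| : ℚ) : ℝ) := by
  rw [← InfinitePlace.prod_eq_abs_norm,
    Real.log_prod (fun w _ => pow_ne_zero _ (ne_of_gt (InfinitePlace.pos_iff.mpr hx)))]
  refine Finset.sum_congr rfl fun w _ => ?_
  rw [Real.log_pow]

/-- the sum of all normalized log absolute values -/
def Sval (x : K) : ℝ :=
  (∑ w : InfinitePlace K, (w.mult : ℝ) * Real.log (w x))
    + ∑ᶠ v : HeightOneSpectrum (𝓞 K), Real.log (finAbs v x)

lemma log_finAbs_ne_zero_imp {v : HeightOneSpectrum (𝓞 K)} {x : K} (hx : x ≠ 0)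
    (h : Real.log (finAbs v x) ≠ 0) : finAbs v x ≠ 1 := by
  intro hcon; rw [hcon] at h; simp at h

lemma exists_div (x : K) (hx : x ≠ 0) :
    ∃ a b : 𝓞 K, a ≠ 0 ∧ b ≠ 0 ∧ x = (a : K) / (b : K) := by
  obtain ⟨a, b, hb, hab⟩ := IsFractionRing.div_surjective (A := 𝓞 K) x
  refine ⟨a, b, ?_, ?_, hab.symm⟩
  · intro h0
    rw [h0] at hab
    simp at hab
    exact hx hab.symm
  · exact nonZeroDivisors.ne_zero hb

lemma log_finAbs_support_finite {x : K} (hx : x ≠ 0) :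
    (Function.support fun v : HeightOneSpectrum (𝓞 K) => Real.log (finAbs v x)).Finite := by
  obtain ⟨a, b, ha, hb, rfl⟩ := exists_div x hx
  have ha' : (a : K) ≠ 0 := by simpa using (RingOfIntegers.coe_ne_zero_iff).mpr ha
  have hb' : (b : K) ≠ 0 := by simpa using (RingOfIntegers.coe_ne_zero_iff).mpr hb
  have hfa := (Ideal.finite_mulSupport (span_ne_zero' ha)).subset (finAbs_support_int ha)
  have hfb := (Ideal.finite_mulSupport (span_ne_zero' hb)).subset (finAbs_support_int hb)
  refine (hfa.union hfb).subset ?_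
  intro v hv
  simp only [Function.mem_support] at hv
  by_contra hcon
  simp only [Set.mem_union, Function.mem_support, not_or, not_not] at hcon
  apply hv
  rw [div_eq_mul_inv, finAbs_mul v ha' (inv_ne_zero hb'), finAbs_inv v hb',
    Real.log_mul (ne_of_gt (finAbs_pos v ha')) (inv_ne_zero (ne_of_gt (finAbs_pos v hb'))),
    Real.log_inv, hcon.1, hcon.2]
  ring

lemma Sval_coe_int {a : 𝓞 K} (ha : a ≠ 0) : Sval ((a : K)) = 0 := by
  have ha' : (a : K) ≠ 0 := by simpa using (RingOfIntegers.coe_ne_zero_iff).mpr ha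
  rw [Sval, sum_mult_log ha', finsum_log_finAbs_int ha, absNorm_eq_norm]
  ring

lemma Sval_mul {x y : K} (hx : x ≠ 0) (hy : y ≠ 0) : Sval (x * y) = Sval x + Sval y := by
  rw [Sval, Sval, Sval]
  have harch : ∑ w : InfinitePlace K, (w.mult : ℝ) * Real.log (w (x * y))
      = (∑ w : InfinitePlace K, (w.mult : ℝ) * Real.log (w x))
        + ∑ w : InfinitePlace K, (w.mult : ℝ) * Real.log (w y) := by
    rw [← Finset.sum_add_distrib]
    refine Finset.sum_congr rfl fun w _ => ?_
    rw [map_mul, Real.log_mul (ne_of_gt (InfinitePlace.pos_iff.mpr hx))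
      (ne_of_gt (InfinitePlace.pos_iff.mpr hy))]
    ring
  have hfin : ∑ᶠ v : HeightOneSpectrum (𝓞 K), Real.log (finAbs v (x * y))
      = (∑ᶠ v : HeightOneSpectrum (𝓞 K), Real.log (finAbs v x))
        + ∑ᶠ v : HeightOneSpectrum (𝓞 K), Real.log (finAbs v y) := by
    rw [← finsum_add_distrib (log_finAbs_support_finite hx) (log_finAbs_support_finite hy)]
    refine finsum_congr fun v => ?_
    rw [finAbs_mul v hx hy,
      Real.log_mul (ne_of_gt (finAbs_pos v hx)) (ne_of_gt (finAbs_pos v hy))]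
  rw [harch, hfin]
  ring

lemma Sval_one : Sval (1 : K) = 0 := by
  rw [Sval]
  have h1 : ∀ w : InfinitePlace K, w (1 : K) = 1 := fun w => map_one w
  simp [h1, finAbs_one]

lemma Sval_eq_zero {x : K} (hx : x ≠ 0) : Sval x = 0 := by
  obtain ⟨a, b, ha, hb, rfl⟩ := exists_div x hx
  have ha' : (a : K) ≠ 0 := by simpa using (RingOfIntegers.coe_ne_zero_iff).mpr ha
  have hb' : (b : K) ≠ 0 := by simpa using (RingOfIntegers.coe_ne_zero_iff).mpr hb
  have hinv : Sval ((b : K)⁻¹) = - Sval ((b : K)) := by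
    have := Sval_mul (inv_ne_zero hb') hb'
    rw [inv_mul_cancel₀ hb', Sval_one] at this
    linarith
  rw [div_eq_mul_inv, Sval_mul ha' (inv_ne_zero hb'), hinv, Sval_coe_int ha, Sval_coe_int hb]
  ring


lemma exists_integer_of_valuation_le_one {x : K} (hx : x ≠ 0)
    (h : ∀ v : HeightOneSpectrum (𝓞 K), v.valuation K x ≤ 1) :
    ∃ a : 𝓞 K, (a : K) = x := by
  obtain ⟨⟨a, b⟩, hab⟩ := IsLocalization.mk'_surjective (nonZeroDivisors (𝓞 K)) x
  dsimp only at hab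
  have hb : (b : 𝓞 K) ≠ 0 := nonZeroDivisors.ne_zero b.2
  have ha : a ≠ 0 := by
    intro h0
    rw [h0, IsLocalization.mk'_zero] at hab
    exact hx hab.symm
  have hcnt : ∀ v : HeightOneSpectrum (𝓞 K), cnt v (b : 𝓞 K) ≤ cnt v a := by
    intro v
    have hv := h v
    rw [← hab, IsDedekindDomain.HeightOneSpectrum.valuation_of_mk'] at hv
    have hb0 : v.intValuation (b : 𝓞 K) ≠ 0 := v.intValuation_ne_zero _ hb
    have hle : v.intValuation a ≤ v.intValuation (b : 𝓞 K) := by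
      rw [div_le_one₀ (zero_lt_iff.mpr hb0)] at hv
      exact hv
    have hia : v.intValuation a = Multiplicative.ofAdd (-(cnt v a : ℤ)) :=
      v.intValuationDef_if_neg ha
    have hib : v.intValuation (b : 𝓞 K) = Multiplicative.ofAdd (-(cnt v (b : 𝓞 K) : ℤ)) :=
      v.intValuationDef_if_neg hb
    rw [hia, hib, WithZero.coe_le_coe, Multiplicative.ofAdd_le, neg_le_neg_iff,
      Nat.cast_le] at hle
    exact hle
  have hdvd : (b : 𝓞 K) ∣ a := by
    rw [← Ideal.span_singleton_le_span_singleton, ← Ideal.dvd_iff_le]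
    rw [UniqueFactorizationMonoid.dvd_iff_normalizedFactors_le_normalizedFactors (span_ne_zero' hb) (span_ne_zero' ha),
      Multiset.le_iff_count]
    intro P
    by_cases hP : P ∈ UniqueFactorizationMonoid.normalizedFactors
        (Ideal.span ({(b : 𝓞 K)} : Set (𝓞 K)))
    · have hprime : Prime P := UniqueFactorizationMonoid.prime_of_normalized_factor P hP
      have hPbot : P ≠ ⊥ := by
        intro h0
        have := UniqueFactorizationMonoid.dvd_of_mem_normalizedFactors hP
        rw [h0] at this
        exact span_ne_zero' hb (zero_dvd_iff.mp this)
      set v : HeightOneSpectrum (𝓞 K) :=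
        ⟨P, Ideal.isPrime_of_prime hprime, hPbot⟩ with hv
      have h1 := count_associates_factors_eq (span_ne_zero' hb)
        (Ideal.isPrime_of_prime hprime) hPbot
      have h2 := count_associates_factors_eq (span_ne_zero' ha)
        (Ideal.isPrime_of_prime hprime) hPbot
      rw [← h1, ← h2]
      exact hcnt v
    · rw [Multiset.count_eq_zero.mpr hP]
      exact Nat.zero_le _
  obtain ⟨c, hc⟩ := hdvd
  refine ⟨c, ?_⟩
  rw [← hab, IsFractionRing.mk'_eq_div]
  have hbK : (algebraMap (𝓞 K) K) (b : 𝓞 K) ≠ 0 := by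
    simpa using (RingOfIntegers.coe_ne_zero_iff).mpr hb
  show (algebraMap (𝓞 K) K) c = _
  rw [eq_div_iff hbK, ← map_mul]
  exact congrArg _ (by rw [hc, mul_comm])

lemma pow_eq_one_of_abs_eq_one {x : K} (hx : x ≠ 0)
    (harch : ∀ w : InfinitePlace K, w x = 1)
    (hfin : ∀ v : HeightOneSpectrum (𝓞 K), finAbs v x = 1) :
    ∃ m : ℕ, 0 < m ∧ x ^ m = 1 := by
  obtain ⟨a, rfl⟩ := exists_integer_of_valuation_le_one hx
    (fun v => le_of_eq ((finAbs_eq_one_iff v hx).mp (hfin v)))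
  have hint : IsIntegral ℤ ((a : K)) := RingOfIntegers.isIntegral_coe a
  have hemb : ∀ φ : K →+* ℂ, ‖φ (a : K)‖ = 1 := by
    intro φ
    have := harch (InfinitePlace.mk φ)
    rwa [InfinitePlace.apply] at this
  obtain ⟨n, hn, hpow⟩ := NumberField.Embeddings.pow_eq_one_of_norm_eq_one K ℂ hint hemb
  exact ⟨n, hn, hpow⟩

lemma real_pow_eq_one {a : ℝ} (ha : 0 < a) {m : ℕ} (hm : 0 < m) (h : a ^ m = 1) : a = 1 := by
  rcases lt_trichotomy a 1 with h1 | h1 | h1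
  · have := pow_lt_one₀ (le_of_lt ha) h1 (Nat.pos_iff_ne_zero.mp hm)
    rw [h] at this; exact absurd this (lt_irrefl 1)
  · exact h1
  · have := one_lt_pow₀ h1 (Nat.pos_iff_ne_zero.mp hm)
    rw [h] at this; exact absurd this (lt_irrefl 1)

lemma finAbs_pow (v : HeightOneSpectrum (𝓞 K)) {x : K} (hx : x ≠ 0) (m : ℕ) :
    finAbs v (x ^ m) = finAbs v x ^ m := by
  induction m with
  | zero => simpa using finAbs_one v
  | succ n ih => rw [pow_succ, pow_succ, finAbs_mul v (pow_ne_zero n hx) hx, ih]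

lemma abs_eq_one_of_torsion {x : K} {m : ℕ} (hm : 0 < m) (h : x ^ m = 1) :
    (∀ w : InfinitePlace K, w x = 1) ∧
      (∀ v : HeightOneSpectrum (𝓞 K), finAbs v x = 1) := by
  have hx : x ≠ 0 := by
    intro h0; rw [h0, zero_pow (Nat.pos_iff_ne_zero.mp hm)] at h; exact zero_ne_one h
  constructor
  · intro w
    refine real_pow_eq_one (InfinitePlace.pos_iff.mpr hx) hm ?_
    rw [← map_pow, h, map_one]
  · intro v
    refine real_pow_eq_one (finAbs_pos v hx) hm ?_
    rw [← finAbs_pow v hx, h, finAbs_one]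


lemma logSumLemma {n : ℕ} (hn : 0 < n) (b : Fin n → ℝ) (hb : ∀ i, 0 < b i) :
    (Real.log n + ∑ i, (1/(n:ℝ)) * Real.log (b i) ≤ Real.log (∑ i, b i)) ∧
    (Real.log (∑ i, b i) = Real.log n + ∑ i, (1/(n:ℝ)) * Real.log (b i) →
      ∀ i j, b i = b j) := by
  have hnR : (0:ℝ) < n := by exact_mod_cast hn
  have hw₀ : ∀ i ∈ Finset.univ (α := Fin n), (0:ℝ) < 1/(n:ℝ) := fun _ _ => by positivity
  have hw₁ : ∑ _i : Fin n, (1/(n:ℝ)) = 1 := by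
    rw [Finset.sum_const, Finset.card_univ, Fintype.card_fin, nsmul_eq_mul]
    field_simp
  have hmem : ∀ i ∈ Finset.univ (α := Fin n), b i ∈ Set.Ioi (0:ℝ) := fun i _ => hb i
  have hsum_pos : 0 < ∑ i, b i :=
    Finset.sum_pos (fun i _ => hb i) (Finset.univ_nonempty_iff.mpr ⟨⟨0, hn⟩⟩)
  have hsmul : ∑ i, (1/(n:ℝ)) • b i = (1/(n:ℝ)) * ∑ i, b i := by
    simp [smul_eq_mul, Finset.mul_sum]
  have hlog : Real.log ((1/(n:ℝ)) * ∑ i, b i)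
      = Real.log (∑ i, b i) - Real.log n := by
    rw [Real.log_mul (by positivity) (ne_of_gt hsum_pos), one_div, Real.log_inv]
    ring
  have hjen := (strictConcaveOn_log_Ioi.concaveOn).le_map_sum
    (fun i _ => le_of_lt (hw₀ i (Finset.mem_univ i))) hw₁ hmem
  rw [hsmul, hlog] at hjen
  simp only [smul_eq_mul] at hjen
  constructor
  · linarith
  · intro heq
    have h_eq : Real.log (∑ i, (1/(n:ℝ)) • b i)
        ≤ ∑ i, (1/(n:ℝ)) • Real.log (b i) := by
      rw [hsmul, hlog]
      simp only [smul_eq_mul]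
      linarith
    intro i j
    exact strictConcaveOn_log_Ioi.eq_of_map_sum_eq hw₀ hw₁ hmem h_eq
      (Finset.mem_univ i) (Finset.mem_univ j)

lemma supLemma {n : ℕ} (hn : 0 < n) (f : Fin n → ℝ) (hf : ∀ i, 0 < f i) :
    (∑ i, (1/(n:ℝ)) * Real.log (f i) ≤ Real.log (⨆ i, f i)) ∧
    (Real.log (⨆ i, f i) = ∑ i, (1/(n:ℝ)) * Real.log (f i) →
      ∀ i, f i = ⨆ j, f j) := by
  have hnR : (0:ℝ) < n := by exact_mod_cast hn
  have hbdd : BddAbove (Set.range f) := (Set.finite_range f).bddAbove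
  have hle : ∀ i, f i ≤ ⨆ j, f j := fun i => le_ciSup hbdd i
  have hsup_pos : 0 < ⨆ j, f j := lt_of_lt_of_le (hf ⟨0, hn⟩) (hle ⟨0, hn⟩)
  have hlogle : ∀ i, Real.log (f i) ≤ Real.log (⨆ j, f j) :=
    fun i => Real.log_le_log (hf i) (hle i)
  have hsum : ∑ _i : Fin n, (1/(n:ℝ)) * Real.log (⨆ j, f j) = Real.log (⨆ j, f j) := by
    rw [Finset.sum_const, Finset.card_univ, Fintype.card_fin, nsmul_eq_mul]
    field_simp
  constructor
  · calc ∑ i, (1/(n:ℝ)) * Real.log (f i)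
        ≤ ∑ _i : Fin n, (1/(n:ℝ)) * Real.log (⨆ j, f j) := by
          refine Finset.sum_le_sum fun i _ => ?_
          have := hlogle i
          have hpos : (0:ℝ) < 1/(n:ℝ) := by positivity
          nlinarith
      _ = Real.log (⨆ j, f j) := hsum
  · intro heq
    have hzero : ∑ i : Fin n, ((1/(n:ℝ)) * Real.log (⨆ j, f j)
        - (1/(n:ℝ)) * Real.log (f i)) = 0 := by
      rw [Finset.sum_sub_distrib, hsum, heq]
      ring
    have hterm := (Finset.sum_eq_zero_iff_of_nonneg (fun i _ => by
      have := hlogle i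
      have hpos : (0:ℝ) < 1/(n:ℝ) := by positivity
      nlinarith)).mp hzero
    intro i
    have hti := hterm i (Finset.mem_univ i)
    have hlogeq : Real.log (f i) = Real.log (⨆ j, f j) := by
      have hpos : (0:ℝ) < 1/(n:ℝ) := by positivity
      have := sub_eq_zero.mp hti
      field_simp at this
      linarith [this]
    have := congrArg Real.exp hlogeq
    rw [Real.exp_log (hf i), Real.exp_log hsup_pos] at this
    exact this

end Aux

set_option maxHeartbeats 2000000 in
/-- The projective height of a point `(1 : ξ_1 : ⋯ : ξ_N)` with nonzero coordinates
in a number field is at least `(1/2)·log(N+1)`, with equality if and only if every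
`ξ_i` is a root of unity. -/
theorem projHeight_torus_point_lower_bound {N : ℕ} (K : Type) [Field K] [NumberField K]
    (ξ : Fin N → K) (hξ : ∀ i, ξ i ≠ 0) :
    Real.log ((N : ℝ) + 1) / 2 ≤ projHeightK K (Fin.cons 1 ξ) ∧
    (projHeightK K (Fin.cons 1 ξ) = Real.log ((N : ℝ) + 1) / 2 ↔
      ∀ i, ∃ m : ℕ, 0 < m ∧ ξ i ^ m = 1) := by
  have hd0 : 0 < Module.finrank ℚ K := Module.finrank_pos
  set d : ℝ := (Module.finrank ℚ K : ℝ) with hdd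
  have hd : (0:ℝ) < d := by rw [hdd]; exact_mod_cast hd0
  set η : Fin (N+1) → K := Fin.cons 1 ξ with hη_def
  have hη : ∀ i, η i ≠ 0 := by
    intro i
    refine Fin.cases ?_ ?_ i
    · rw [hη_def, Fin.cons_zero]; exact one_ne_zero
    · intro j; rw [hη_def, Fin.cons_succ]; exact hξ j
  have hη0 : η 0 = 1 := Fin.cons_zero _ _
  have hηs : ∀ j, η j.succ = ξ j := fun j => Fin.cons_succ _ _ _
  have hNn : ((N:ℝ)+1) = ((N+1 : ℕ) : ℝ) := by push_cast; ring
  have hn1 : (0:ℝ) < (N:ℝ)+1 := by positivity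
  have hwpos : ∀ (w : InfinitePlace K) (i : Fin (N+1)), 0 < w (η i) :=
    fun w i => InfinitePlace.pos_iff.mpr (hη i)
  -- the finite set of bad finite places
  have hfinsupp : ∀ i : Fin (N+1),
      (Function.support fun v : HeightOneSpectrum (𝓞 K) =>
        Real.log (finAbs v (η i))).Finite := fun i => log_finAbs_support_finite (hη i)
  have hU : (⋃ i : Fin (N+1), Function.support fun v : HeightOneSpectrum (𝓞 K) =>
      Real.log (finAbs v (η i))).Finite := Set.finite_iUnion hfinsupp
  set T : Finset (HeightOneSpectrum (𝓞 K)) := hU.toFinset with hT_def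
  have hmemT : ∀ v : HeightOneSpectrum (𝓞 K), v ∉ T → ∀ i, finAbs v (η i) = 1 := by
    intro v hv i
    have hlz : Real.log (finAbs v (η i)) = 0 := by
      by_contra hne
      exact hv (by rw [hT_def, Set.Finite.mem_toFinset]; exact Set.mem_iUnion.mpr ⟨i, hne⟩)
    rcases Real.log_eq_zero.mp hlz with h | h | h
    · exact absurd h (ne_of_gt (finAbs_pos v (hη i)))
    · exact h
    · nlinarith [finAbs_pos v (hη i)]
  have hsup_one : ∀ v : HeightOneSpectrum (𝓞 K), (∀ i, finAbs v (η i) = 1) →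
      (⨆ i, finAbs v (η i)) = 1 := by
    intro v h
    simp only [h]
    exact ciSup_const
  -- rewrite the height as a finite sum
  have hPH : projHeightK K η
      = (∑ w : InfinitePlace K,
          ((w.mult : ℝ) / d) * Real.log (Real.sqrt (∑ i, (w (η i)) ^ 2)))
        + ∑ v ∈ T, ((1:ℝ)/d) * Real.log (⨆ i, finAbs v (η i)) := by
    rw [projHeightK]
    congr 1
    refine finsum_eq_sum_of_support_subset _ ?_
    intro v hv
    simp only [Function.mem_support] at hv
    by_contra hvT
    apply hv
    rw [hsup_one v (hmemT v hvT), Real.log_one, mul_zero]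
  -- the product formula, restricted to T
  have hSv : ∀ i : Fin (N+1),
      (∑ w : InfinitePlace K, (w.mult : ℝ) * Real.log (w (η i)))
        + ∑ v ∈ T, Real.log (finAbs v (η i)) = 0 := by
    intro i
    have h0 := Sval_eq_zero (hη i)
    rw [Sval] at h0
    have hsub : (Function.support fun v : HeightOneSpectrum (𝓞 K) =>
        Real.log (finAbs v (η i))) ⊆ (T : Set (HeightOneSpectrum (𝓞 K))) := by
      intro v hv
      show v ∈ (hU.toFinset : Set (HeightOneSpectrum (𝓞 K)))
      rw [Set.Finite.coe_toFinset]
      exact Set.mem_iUnion.mpr ⟨i, hv⟩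
    rwa [finsum_eq_sum_of_support_subset _ hsub] at h0
  have hmult_sum : ∑ w : InfinitePlace K, (w.mult : ℝ) = d := by
    rw [hdd]; exact_mod_cast InfinitePlace.sum_mult_eq
  have hsum1 : ∑ w : InfinitePlace K, ((w.mult : ℝ)/d) = 1 := by
    rw [← Finset.sum_div, hmult_sum, div_self (ne_of_gt hd)]
  -- the local defects
  have hA0 : ∀ w : InfinitePlace K,
      0 ≤ Real.log (Real.sqrt (∑ i, (w (η i)) ^ 2)) - Real.log ((N:ℝ)+1)/2
        - (1/((N:ℝ)+1)) * ∑ i, Real.log (w (η i)) := by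
    intro w
    have hb : ∀ i : Fin (N+1), 0 < (w (η i))^2 := fun i => pow_pos (hwpos w i) 2
    have hls := (logSumLemma (Nat.succ_pos N) (fun i => (w (η i))^2) hb).1
    have hsq : Real.log (Real.sqrt (∑ i, (w (η i)) ^ 2))
        = Real.log (∑ i, (w (η i)) ^ 2) / 2 :=
      Real.log_sqrt (Finset.sum_nonneg fun i _ => sq_nonneg _)
    have hlog2 : ∀ i : Fin (N+1), Real.log ((w (η i))^2) = 2 * Real.log (w (η i)) :=
      fun i => by rw [Real.log_pow]; push_cast; ring
    simp only [hlog2] at hls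
    rw [← hNn] at hls
    have hexp : ∑ i : Fin (N+1), (1/((N:ℝ)+1)) * (2 * Real.log (w (η i)))
        = 2 * ((1/((N:ℝ)+1)) * ∑ i, Real.log (w (η i))) := by
      rw [Finset.mul_sum, Finset.mul_sum]
      exact Finset.sum_congr rfl fun i _ => by ring
    rw [hexp] at hls
    rw [hsq]
    linarith
  have hB0 : ∀ v : HeightOneSpectrum (𝓞 K),
      0 ≤ Real.log (⨆ i, finAbs v (η i))
        - (1/((N:ℝ)+1)) * ∑ i, Real.log (finAbs v (η i)) := by
    intro v
    have hf : ∀ i : Fin (N+1), 0 < finAbs v (η i) := fun i => finAbs_pos v (hη i)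
    have hls := (supLemma (Nat.succ_pos N) (fun i => finAbs v (η i)) hf).1
    rw [← hNn] at hls
    rw [Finset.mul_sum]
    linarith
  -- key identity
  have h2 : (∑ w : InfinitePlace K, (w.mult : ℝ) * ∑ i, Real.log (w (η i)))
      + ∑ v ∈ T, ∑ i, Real.log (finAbs v (η i)) = 0 := by
    have ha : ∑ w : InfinitePlace K, (w.mult : ℝ) * ∑ i, Real.log (w (η i))
        = ∑ i : Fin (N+1), ∑ w : InfinitePlace K, (w.mult : ℝ) * Real.log (w (η i)) := by
      simp only [Finset.mul_sum]
      exact Finset.sum_comm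
    have hb : ∑ v ∈ T, ∑ i : Fin (N+1), Real.log (finAbs v (η i))
        = ∑ i : Fin (N+1), ∑ v ∈ T, Real.log (finAbs v (η i)) := Finset.sum_comm
    rw [ha, hb, ← Finset.sum_add_distrib]
    exact Finset.sum_eq_zero fun i _ => hSv i
  have hkey : projHeightK K η - Real.log ((N:ℝ)+1)/2
      = (∑ w : InfinitePlace K, ((w.mult : ℝ)/d) *
          (Real.log (Real.sqrt (∑ i, (w (η i)) ^ 2)) - Real.log ((N:ℝ)+1)/2
            - (1/((N:ℝ)+1)) * ∑ i, Real.log (w (η i))))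
        + ∑ v ∈ T, ((1:ℝ)/d) *
          (Real.log (⨆ i, finAbs v (η i))
            - (1/((N:ℝ)+1)) * ∑ i, Real.log (finAbs v (η i))) := by
    have eA : ∑ w : InfinitePlace K, ((w.mult : ℝ)/d) *
        (Real.log (Real.sqrt (∑ i, (w (η i)) ^ 2)) - Real.log ((N:ℝ)+1)/2
          - (1/((N:ℝ)+1)) * ∑ i, Real.log (w (η i)))
        = (∑ w : InfinitePlace K, ((w.mult : ℝ)/d) *
            Real.log (Real.sqrt (∑ i, (w (η i)) ^ 2)))
          - Real.log ((N:ℝ)+1)/2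
          - ((1/((N:ℝ)+1)) * (1/d)) *
            ∑ w : InfinitePlace K, (w.mult : ℝ) * ∑ i, Real.log (w (η i)) := by
      simp only [mul_sub]
      rw [Finset.sum_sub_distrib, Finset.sum_sub_distrib]
      congr 1
      · congr 1
        rw [← Finset.sum_mul, hsum1, one_mul]
      · rw [Finset.mul_sum]
        exact Finset.sum_congr rfl fun w _ => by ring
    have eB : ∑ v ∈ T, ((1:ℝ)/d) *
        (Real.log (⨆ i, finAbs v (η i))
          - (1/((N:ℝ)+1)) * ∑ i, Real.log (finAbs v (η i)))
        = (∑ v ∈ T, ((1:ℝ)/d) * Real.log (⨆ i, finAbs v (η i)))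
          - ((1/((N:ℝ)+1)) * (1/d)) * ∑ v ∈ T, ∑ i, Real.log (finAbs v (η i)) := by
      simp only [mul_sub]
      rw [Finset.sum_sub_distrib]
      congr 1
      rw [Finset.mul_sum]
      exact Finset.sum_congr rfl fun v _ => by ring
    rw [eA, eB, hPH]
    have h2' : ((1/((N:ℝ)+1)) * (1/d)) *
        ((∑ w : InfinitePlace K, (w.mult : ℝ) * ∑ i, Real.log (w (η i)))
          + ∑ v ∈ T, ∑ i, Real.log (finAbs v (η i))) = 0 := by
      rw [h2, mul_zero]
    rw [mul_add] at h2'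
    linarith
  have hrhs_nonneg : 0 ≤ (∑ w : InfinitePlace K, ((w.mult : ℝ)/d) *
          (Real.log (Real.sqrt (∑ i, (w (η i)) ^ 2)) - Real.log ((N:ℝ)+1)/2
            - (1/((N:ℝ)+1)) * ∑ i, Real.log (w (η i))))
        + ∑ v ∈ T, ((1:ℝ)/d) *
          (Real.log (⨆ i, finAbs v (η i))
            - (1/((N:ℝ)+1)) * ∑ i, Real.log (finAbs v (η i))) := by
    have s1 : 0 ≤ ∑ w : InfinitePlace K, ((w.mult : ℝ)/d) *
          (Real.log (Real.sqrt (∑ i, (w (η i)) ^ 2)) - Real.log ((N:ℝ)+1)/2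
            - (1/((N:ℝ)+1)) * ∑ i, Real.log (w (η i))) :=
      Finset.sum_nonneg fun w _ => mul_nonneg (by positivity) (hA0 w)
    have s2 : 0 ≤ ∑ v ∈ T, ((1:ℝ)/d) *
          (Real.log (⨆ i, finAbs v (η i))
            - (1/((N:ℝ)+1)) * ∑ i, Real.log (finAbs v (η i))) :=
      Finset.sum_nonneg fun v _ => mul_nonneg (by positivity) (hB0 v)
    linarith
  constructor
  · linarith [hkey, hrhs_nonneg]
  constructor
  · -- equality implies torsion
    intro heq
    have hzero : (∑ w : InfinitePlace K, ((w.mult : ℝ)/d) *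
          (Real.log (Real.sqrt (∑ i, (w (η i)) ^ 2)) - Real.log ((N:ℝ)+1)/2
            - (1/((N:ℝ)+1)) * ∑ i, Real.log (w (η i))))
        + ∑ v ∈ T, ((1:ℝ)/d) *
          (Real.log (⨆ i, finAbs v (η i))
            - (1/((N:ℝ)+1)) * ∑ i, Real.log (finAbs v (η i))) = 0 := by
      rw [← hkey, heq]; ring
    have s1 : 0 ≤ ∑ w : InfinitePlace K, ((w.mult : ℝ)/d) *
          (Real.log (Real.sqrt (∑ i, (w (η i)) ^ 2)) - Real.log ((N:ℝ)+1)/2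
            - (1/((N:ℝ)+1)) * ∑ i, Real.log (w (η i))) :=
      Finset.sum_nonneg fun w _ => mul_nonneg (by positivity) (hA0 w)
    have s2 : 0 ≤ ∑ v ∈ T, ((1:ℝ)/d) *
          (Real.log (⨆ i, finAbs v (η i))
            - (1/((N:ℝ)+1)) * ∑ i, Real.log (finAbs v (η i))) :=
      Finset.sum_nonneg fun v _ => mul_nonneg (by positivity) (hB0 v)
    have hS1 : ∑ w : InfinitePlace K, ((w.mult : ℝ)/d) *
          (Real.log (Real.sqrt (∑ i, (w (η i)) ^ 2)) - Real.log ((N:ℝ)+1)/2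
            - (1/((N:ℝ)+1)) * ∑ i, Real.log (w (η i))) = 0 := by linarith
    have hS2 : ∑ v ∈ T, ((1:ℝ)/d) *
          (Real.log (⨆ i, finAbs v (η i))
            - (1/((N:ℝ)+1)) * ∑ i, Real.log (finAbs v (η i))) = 0 := by linarith
    have hAeq : ∀ w : InfinitePlace K,
        Real.log (Real.sqrt (∑ i, (w (η i)) ^ 2)) - Real.log ((N:ℝ)+1)/2
          - (1/((N:ℝ)+1)) * ∑ i, Real.log (w (η i)) = 0 := by
      intro w
      have := (Finset.sum_eq_zero_iff_of_nonneg
        (fun w _ => mul_nonneg (by positivity : (0:ℝ) ≤ (w.mult : ℝ)/d) (hA0 w))).mp hS1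
        w (Finset.mem_univ w)
      have hmw : (0:ℝ) < (w.mult : ℝ)/d := by
        have : (0:ℝ) < (w.mult : ℝ) := by exact_mod_cast InfinitePlace.mult_pos
        positivity
      exact (mul_eq_zero.mp this).resolve_left (ne_of_gt hmw)
    have hBeq : ∀ v ∈ T,
        Real.log (⨆ i, finAbs v (η i))
          - (1/((N:ℝ)+1)) * ∑ i, Real.log (finAbs v (η i)) = 0 := by
      intro v hv
      have := (Finset.sum_eq_zero_iff_of_nonneg
        (fun v _ => mul_nonneg (by positivity : (0:ℝ) ≤ (1:ℝ)/d) (hB0 v))).mp hS2 v hv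
      exact (mul_eq_zero.mp this).resolve_left (by positivity)
    -- all archimedean absolute values are 1
    have harch : ∀ (w : InfinitePlace K) (j : Fin (N+1)), w (η j) = 1 := by
      intro w j
      have hb : ∀ i : Fin (N+1), 0 < (w (η i))^2 := fun i => pow_pos (hwpos w i) 2
      have hsq : Real.log (Real.sqrt (∑ i, (w (η i)) ^ 2))
          = Real.log (∑ i, (w (η i)) ^ 2) / 2 :=
        Real.log_sqrt (Finset.sum_nonneg fun i _ => sq_nonneg _)
      have hAw := hAeq w
      rw [hsq] at hAw
      have heq2 : Real.log (∑ i, (w (η i)) ^ 2)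
          = Real.log ((N+1 : ℕ) : ℝ)
            + ∑ i : Fin (N+1), (1/(((N+1 : ℕ)) : ℝ)) * Real.log ((w (η i))^2) := by
        rw [← hNn]
        have hlog2 : ∀ i : Fin (N+1), Real.log ((w (η i))^2) = 2 * Real.log (w (η i)) :=
          fun i => by rw [Real.log_pow]; push_cast; ring
        simp only [hlog2]
        have hexp : ∑ i : Fin (N+1), (1/((N:ℝ)+1)) * (2 * Real.log (w (η i)))
            = 2 * ((1/((N:ℝ)+1)) * ∑ i, Real.log (w (η i))) := by
          rw [Finset.mul_sum, Finset.mul_sum]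
          exact Finset.sum_congr rfl fun i _ => by ring
        rw [hexp]
        linarith
      have hall := (logSumLemma (Nat.succ_pos N) (fun i => (w (η i))^2) hb).2 heq2
      have h0 : (w (η 0))^2 = 1 := by rw [hη0, map_one, one_pow]
      have hj2 : (w (η j))^2 = 1 := by rw [hall j 0, h0]
      nlinarith [hwpos w j]
    -- all finite absolute values are 1
    have hfin : ∀ (v : HeightOneSpectrum (𝓞 K)) (j : Fin (N+1)), finAbs v (η j) = 1 := by
      intro v j
      by_cases hv : v ∈ T
      · have hf : ∀ i : Fin (N+1), 0 < finAbs v (η i) := fun i => finAbs_pos v (hη i)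
        have hBv := hBeq v hv
        have heq2 : Real.log (⨆ i, finAbs v (η i))
            = ∑ i : Fin (N+1), (1/(((N+1 : ℕ)) : ℝ)) * Real.log (finAbs v (η i)) := by
          rw [← hNn, ← Finset.mul_sum]
          linarith
        have hall := (supLemma (Nat.succ_pos N) (fun i => finAbs v (η i)) hf).2 heq2
        have h0 : finAbs v (η 0) = 1 := by rw [hη0, finAbs_one]
        have hsup1 : (⨆ i, finAbs v (η i)) = 1 := by rw [← hall 0, h0]
        rw [hall j, hsup1]
      · exact hmemT v hv j
    intro i
    refine pow_eq_one_of_abs_eq_one (hξ i) ?_ ?_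
    · intro w
      have := harch w i.succ
      rwa [hηs i] at this
    · intro v
      have := hfin v i.succ
      rwa [hηs i] at this
  · -- torsion implies equality
    intro htor
    have harch : ∀ (w : InfinitePlace K) (j : Fin (N+1)), w (η j) = 1 := by
      intro w j
      refine Fin.cases ?_ ?_ j
      · rw [hη0, map_one]
      · intro k
        rw [hηs k]
        obtain ⟨m, hm, hpow⟩ := htor k
        exact (abs_eq_one_of_torsion hm hpow).1 w
    have hfin : ∀ (v : HeightOneSpectrum (𝓞 K)) (j : Fin (N+1)), finAbs v (η j) = 1 := by
      intro v j
      refine Fin.cases ?_ ?_ j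
      · rw [hη0, finAbs_one]
      · intro k
        rw [hηs k]
        obtain ⟨m, hm, hpow⟩ := htor k
        exact (abs_eq_one_of_torsion hm hpow).2 v
    have hAz : ∀ w : InfinitePlace K,
        Real.log (Real.sqrt (∑ i, (w (η i)) ^ 2)) - Real.log ((N:ℝ)+1)/2
          - (1/((N:ℝ)+1)) * ∑ i, Real.log (w (η i)) = 0 := by
      intro w
      have hsum : ∑ i : Fin (N+1), (w (η i)) ^ 2 = (N:ℝ)+1 := by
        simp only [harch w, one_pow]
        rw [Finset.sum_const, Finset.card_univ, Fintype.card_fin, nsmul_eq_mul, mul_one]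
        push_cast; ring
      have hlogs : ∑ i : Fin (N+1), Real.log (w (η i)) = 0 := by
        simp [harch w]
      rw [hsum, hlogs, Real.log_sqrt (le_of_lt hn1)]
      ring
    have hBz : ∀ v : HeightOneSpectrum (𝓞 K),
        Real.log (⨆ i, finAbs v (η i))
          - (1/((N:ℝ)+1)) * ∑ i, Real.log (finAbs v (η i)) = 0 := by
      intro v
      have hsup1 : (⨆ i, finAbs v (η i)) = 1 := hsup_one v (hfin v)
      have hlogs : ∑ i : Fin (N+1), Real.log (finAbs v (η i)) = 0 := by
        simp [hfin v]
      rw [hsup1, hlogs, Real.log_one]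
      ring
    have : projHeightK K η - Real.log ((N:ℝ)+1)/2 = 0 := by
      rw [hkey]
      rw [Finset.sum_eq_zero fun w _ => by rw [hAz w, mul_zero],
        Finset.sum_eq_zero fun v _ => by rw [hBz v, mul_zero], add_zero]
    linarith
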